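/- In a finite abelian group E, if a subset X pd-tiles E (i.e., there exists a nonnegative function h: E → ℝ with h(0) = 1, 1_X ∗ h = 1_E, and the Fourier transform of h is nonnegative), then X weakly tiles its complement E \ X, i.e., 1_X ∗ (h − δ_0) = 1_{E \ X} with h − δ_0 nonnegative. -/
import Mathlib


open scoped ComplexOrder
/-- In a finite abelian group `E`, if `X` pd-tiles `E` (there is `h ≥ 0` with
`h 0 = 1`, `1_X ∗ h = 1_E` and nonnegative Fourier transform), then `X` weakly tiles
its complement: `1_X ∗ (h - δ₀) = 1_{E \ X}` and `h - δ₀` is nonnegative. -/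
theorem weak_tiling_of_pd_tiling
    {E : Type*} [AddCommGroup E] [Fintype E] [DecidableEq E]
    (X : Set E) (h : E → ℝ)
    (hnonneg : ∀ x, 0 ≤ h x) (h0 : h 0 = 1)
    (htile : ∀ x : E, ∑ y : E, X.indicator (fun _ => (1 : ℝ)) y * h (x - y) = 1)
    (hft : ∀ γ : AddChar E ℂ, 0 ≤ ∑ x : E, (h x : ℂ) * γ x) :
    (∀ x, 0 ≤ h x - (if x = 0 then (1 : ℝ) else 0)) ∧
    (∀ x : E, ∑ y : E,
        X.indicator (fun _ => (1 : ℝ)) y * (h (x - y) - (if x - y = 0 then (1 : ℝ) else 0))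
      = (Xᶜ).indicator (fun _ => (1 : ℝ)) x) := by
  constructor
  · intro x
    by_cases hx : x = 0
    · simp [hx, h0]
    · simp [hx, hnonneg x]
  · intro x
    have hδ : ∑ y : E, X.indicator (fun _ => (1 : ℝ)) y * (if x - y = 0 then (1 : ℝ) else 0)
        = X.indicator (fun _ => (1 : ℝ)) x := by
      rw [Finset.sum_eq_single x]
      · simp
      · intro y _ hy
        have hxy : x - y ≠ 0 := fun hc => hy (sub_eq_zero.mp hc).symm
        simp [hxy]
      · simp
    have := htile x
    calc ∑ y : E, X.indicator (fun _ => (1 : ℝ)) y *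
          (h (x - y) - (if x - y = 0 then (1 : ℝ) else 0))
        = (∑ y : E, X.indicator (fun _ => (1 : ℝ)) y * h (x - y))
          - ∑ y : E, X.indicator (fun _ => (1 : ℝ)) y * (if x - y = 0 then (1 : ℝ) else 0) := by
          rw [← Finset.sum_sub_distrib]; simp [mul_sub]
      _ = 1 - X.indicator (fun _ => (1 : ℝ)) x := by rw [this, hδ]
      _ = (Xᶜ).indicator (fun _ => (1 : ℝ)) x := by
          by_cases hx : x ∈ X <;> simp [hx, Set.indicator_apply]
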